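/- For every positive integer m, the tail double sum ∑_{r=m}^∞ (1/r) ∑_{j=r}^∞ 1/(j·3^j) is strictly less than 9/(4·m²·3^m). -/

import Mathlib

lemma geom_third : ∑' j : ℕ, ((1:ℝ)/3)^j = 3/2 := by
  rw [tsum_geometric_of_lt_one (by norm_num) (by norm_num)]
  norm_num

lemma geom_third_summable : Summable (fun j : ℕ => ((1:ℝ)/3)^j) :=
  summable_geometric_of_lt_one (by norm_num) (by norm_num)

lemma term_le (r m : ℕ) (hm : 0 < m) (j : ℕ) :
    1 / (((j : ℝ) + r + m) * 3 ^ (j + r + m))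
      ≤ (1 / (((r:ℝ)+m) * 3^(r+m))) * (1/3)^j := by
  have hm' : (0:ℝ) < m := by exact_mod_cast hm
  have hj : (0:ℝ) ≤ j := Nat.cast_nonneg j
  have hpow : (3:ℝ)^(j+r+m) = 3^j * 3^(r+m) := by rw [add_assoc, pow_add]
  have hrhs : (1 / (((r:ℝ)+m) * 3^(r+m))) * (1/3)^j
      = 1 / ((((r:ℝ)+m)) * (3^j * 3^(r+m))) := by
    rw [div_pow, one_pow, div_mul_div_comm, one_mul]; ring_nf
  rw [hpow, hrhs]
  apply one_div_le_one_div_of_le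
  · positivity
  · have h1 : (r:ℝ)+m ≤ (j:ℝ)+r+m := by linarith
    have h2 : (0:ℝ) < 3^j * 3^(r+m) := by positivity
    exact mul_le_mul_of_nonneg_right h1 h2.le

lemma term_lt (r m : ℕ) (hm : 0 < m) :
    1 / (((1 : ℝ) + r + m) * 3 ^ (1 + r + m))
      < (1 / (((r:ℝ)+m) * 3^(r+m))) * (1/3)^(1:ℕ) := by
  have hm' : (0:ℝ) < m := by exact_mod_cast hm
  have hpow : (3:ℝ)^(1+r+m) = 3^(1:ℕ) * 3^(r+m) := by rw [add_assoc, pow_add]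
  have hrhs : (1 / (((r:ℝ)+m) * 3^(r+m))) * (1/3)^(1:ℕ)
      = 1 / ((((r:ℝ)+m)) * (3^(1:ℕ) * 3^(r+m))) := by
    rw [div_pow, one_pow, div_mul_div_comm, one_mul]; ring_nf
  rw [hpow, hrhs]
  apply one_div_lt_one_div_of_lt
  · positivity
  · have h1 : (r:ℝ)+m < (1:ℝ)+r+m := by
      have : (0:ℝ) ≤ r := Nat.cast_nonneg r
      linarith
    have h2 : (0:ℝ) < 3^(1:ℕ) * 3^(r+m) := by positivity
    exact mul_lt_mul_of_pos_right h1 h2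

lemma inner_summable (r m : ℕ) (hm : 0 < m) :
    Summable (fun j : ℕ => 1 / (((j : ℝ) + r + m) * 3 ^ (j + r + m))) := by
  have hm' : (0:ℝ) < m := by exact_mod_cast hm
  apply Summable.of_nonneg_of_le (fun j => by positivity) (term_le r m hm)
  exact geom_third_summable.mul_left _

lemma inner_lt (r m : ℕ) (hm : 0 < m) :
    ∑' j : ℕ, 1 / (((j : ℝ) + r + m) * 3 ^ (j + r + m))
      < 3/2 * (1/(((r:ℝ)+m) * 3^(r+m))) := by
  have hlt : (1:ℝ) / ((((1:ℕ) : ℝ) + r + m) * 3 ^ ((1:ℕ) + r + m))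
      < (1 / (((r:ℝ)+m) * 3^(r+m))) * (1/3)^(1:ℕ) := by
    exact_mod_cast term_lt r m hm
  have h := Summable.tsum_lt_tsum (i := (1:ℕ)) (term_le r m hm) hlt
    (inner_summable r m hm) (geom_third_summable.mul_left _)
  calc ∑' j : ℕ, 1 / (((j : ℝ) + r + m) * 3 ^ (j + r + m))
      < ∑' j : ℕ, (1 / (((r:ℝ)+m) * 3^(r+m))) * (1/3)^j := h
    _ = (1 / (((r:ℝ)+m) * 3^(r+m))) * (3/2) := by
        rw [tsum_mul_left, geom_third]
    _ = 3/2 * (1/(((r:ℝ)+m) * 3^(r+m))) := by ring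

theorem renyi_double_sum_tail_bound (m : ℕ) (hm : 0 < m) :
    ∑' r : ℕ, (1 / ((r : ℝ) + m)) *
      ∑' j : ℕ, 1 / (((j : ℝ) + r + m) * 3 ^ (j + r + m))
      < 9 / (4 * (m : ℝ) ^ 2 * 3 ^ m) := by
  have hm' : (0:ℝ) < m := by exact_mod_cast hm
  set F : ℕ → ℝ := fun r => (1 / ((r : ℝ) + m)) *
      ∑' j : ℕ, 1 / (((j : ℝ) + r + m) * 3 ^ (j + r + m)) with hF
  set G : ℕ → ℝ := fun r => (3/2 * (1/((m:ℝ)^2 * 3^m))) * (1/3)^r with hG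
  have hFGlt : ∀ r, F r < G r := by
    intro r
    have hr : (0:ℝ) ≤ r := Nat.cast_nonneg r
    have hrm : (0:ℝ) < (r:ℝ) + m := by positivity
    have h1 : F r < (1 / ((r : ℝ) + m)) * (3/2 * (1/(((r:ℝ)+m) * 3^(r+m)))) := by
      exact mul_lt_mul_of_pos_left (inner_lt r m hm) (by positivity)
    refine h1.trans_le ?_
    rw [hG]
    have key : (1 / ((r : ℝ) + m)) * (3/2 * (1/(((r:ℝ)+m) * 3^(r+m))))
        = (3/2) * (1 / (((r:ℝ)+m)^2 * 3^m)) * (1/3)^r := by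
      rw [pow_add, div_pow, one_pow]
      field_simp
    rw [key]
    have hstep : (1 : ℝ) / (((r:ℝ)+m)^2 * 3^m) ≤ 1 / ((m:ℝ)^2 * 3^m) := by
      apply one_div_le_one_div_of_le
      · positivity
      · gcongr
        linarith
    calc (3/2) * (1 / (((r:ℝ)+m)^2 * 3^m)) * (1/3)^r
        ≤ (3/2) * (1 / ((m:ℝ)^2 * 3^m)) * (1/3)^r := by
          exact mul_le_mul_of_nonneg_right
            (mul_le_mul_of_nonneg_left hstep (by norm_num)) (by positivity)
    _ = (3/2 * (1/((m:ℝ)^2 * 3^m))) * (1/3)^r := by ring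
  have hFsum : Summable F := by
    apply Summable.of_nonneg_of_le _ (fun r => (hFGlt r).le)
      (geom_third_summable.mul_left _)
    intro r
    have hrm : (0:ℝ) < (r:ℝ) + m := by positivity
    apply mul_nonneg (by positivity)
    exact tsum_nonneg (fun j => by positivity)
  have h := Summable.tsum_lt_tsum (i := 0) (fun r => (hFGlt r).le) (hFGlt 0) hFsum
    (geom_third_summable.mul_left _)
  have hGtsum : ∑' r, G r = 9 / (4 * (m : ℝ) ^ 2 * 3 ^ m) := by
    rw [hG, tsum_mul_left, geom_third]
    field_simp
    ring
  rw [hGtsum] at h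
  exact h
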